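/- There exists a 2-factorization of the graph K_24 − I (the complete graph on 24 vertices minus a perfect matching I) having exactly 5 triangle-factors and 6 quadrangle-factors; i.e., the Hamilton–Waterloo problem HWP(24; 3, 4; 5, 6) has a solution. -/

import Mathlib

/-- `H` is a 2-factor of the simple graph `G`: a spanning 2-regular subgraph of `G`
(every vertex has exactly two neighbours in `H`). -/
def IsTwoFactor {V : Type*} (G H : SimpleGraph V) : Prop :=
  H ≤ G ∧ ∀ v : V, (H.neighborSet v).ncard = 2

/-- `H` is a 2-factor of `G` all of whose connected components are cycles of length `n`:
since `H` is 2-regular, this is equivalent to requiring that every connected component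
of `H` has exactly `n` vertices. For `n = 3` this is a triangle-factor, for `n = 4` a
quadrangle-factor. -/
def IsCycleFactor {V : Type*} (G H : SimpleGraph V) (n : ℕ) : Prop :=
  IsTwoFactor G H ∧ ∀ v : V, (H.connectedComponentMk v).supp.ncard = n

/-- `F` is a solution of the Hamilton--Waterloo problem HWP on the graph `G` with `r`
triangle-factors and `s` quadrangle-factors: the `r + s` factors `F i` are 2-factors of `G`
whose edge sets partition the edge set of `G` (every edge of `G` lies in exactly one factor),
the first `r` of them being triangle-factors and the remaining `s` quadrangle-factors. -/
def IsHWPSolution {V : Type*} (G : SimpleGraph V) (r s : ℕ)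
    (F : Fin (r + s) → SimpleGraph V) : Prop :=
  (∀ i : Fin (r + s), (i : ℕ) < r → IsCycleFactor G (F i) 3) ∧
  (∀ i : Fin (r + s), r ≤ (i : ℕ) → IsCycleFactor G (F i) 4) ∧
  (∀ e : Sym2 V, e ∈ G.edgeSet → ∃! i : Fin (r + s), e ∈ (F i).edgeSet)

namespace HWP24

/-- The graph on `Fin 24` whose edges are the pairs `{a, f a}` with `f a ≠ a`. -/
def cyc (f : Fin 24 → Fin 24) : SimpleGraph (Fin 24) where
  Adj a b := a ≠ b ∧ (f a = b ∨ f b = a)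
  symm := ⟨fun a b ⟨h1, h2⟩ => ⟨h1.symm, h2.symm⟩⟩
  loopless := ⟨fun a ⟨h, _⟩ => h rfl⟩

instance (f : Fin 24 → Fin 24) : DecidableRel (cyc f).Adj :=
  fun a b => inferInstanceAs (Decidable (a ≠ b ∧ (f a = b ∨ f b = a)))

lemma ncard_neighborSet (f : Fin 24 → Fin 24) (v : Fin 24) :
    ((cyc f).neighborSet v).ncard
      = (Finset.univ.filter fun w => (cyc f).Adj v w).card := by
  rw [← Set.ncard_coe_finset]
  congr 1
  ext w
  simp [SimpleGraph.mem_neighborSet]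

lemma reach_iter (f : Fin 24 → Fin 24) (h1 : ∀ a, f a ≠ a) (u : Fin 24) :
    ∀ n : ℕ, (cyc f).Reachable u (f^[n] u) := by
  intro n
  induction n with
  | zero => exact SimpleGraph.Reachable.refl u
  | succ n ih =>
    rw [Function.iterate_succ_apply']
    exact ih.trans (SimpleGraph.Adj.reachable (show _ ≠ _ ∧ (_ = _ ∨ _ = _) from ⟨(h1 _).symm, Or.inl rfl⟩))

lemma supp_eq (f : Fin 24 → Fin 24) (blk : Fin 24 → ℕ)
    (h1 : ∀ a, f a ≠ a)
    (h2 : ∀ a b, (cyc f).Adj a b → blk a = blk b)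
    (h3 : ∀ u v : Fin 24, blk u = blk v → ∃ k : Fin 4, f^[(k : ℕ)] u = v)
    (v : Fin 24) :
    ((cyc f).connectedComponentMk v).supp = {u | blk u = blk v} := by
  ext u
  simp only [SimpleGraph.ConnectedComponent.mem_supp_iff,
    SimpleGraph.ConnectedComponent.eq, Set.mem_setOf_eq]
  constructor
  · rintro ⟨w⟩
    induction w with
    | nil => rfl
    | cons h p ih => exact (h2 _ _ h).trans ih
  · intro hb
    obtain ⟨k, hk⟩ := h3 u v hb
    exact hk ▸ reach_iter f h1 u (k : ℕ)

lemma ncard_supp (f : Fin 24 → Fin 24) (blk : Fin 24 → ℕ)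
    (h1 : ∀ a, f a ≠ a)
    (h2 : ∀ a b, (cyc f).Adj a b → blk a = blk b)
    (h3 : ∀ u v : Fin 24, blk u = blk v → ∃ k : Fin 4, f^[(k : ℕ)] u = v)
    (v : Fin 24) :
    ((cyc f).connectedComponentMk v).supp.ncard
      = (Finset.univ.filter fun u => blk u = blk v).card := by
  rw [supp_eq f blk h1 h2 h3 v, ← Set.ncard_coe_finset]
  congr 1
  ext u
  simp

def m : Fin 24 → Fin 24 := ![4, 5, 6, 7, 0, 1, 2, 3, 12, 13, 14, 15, 8, 9, 10, 11, 20, 21, 22, 23, 16, 17, 18, 19]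

def f0 : Fin 24 → Fin 24 := ![8, 9, 10, 11, 12, 13, 14, 15, 16, 17, 18, 19, 20, 21, 22, 23, 0, 1, 2, 3, 4, 5, 6, 7]
def f1 : Fin 24 → Fin 24 := ![9, 10, 11, 12, 13, 14, 15, 8, 17, 18, 19, 20, 21, 22, 23, 16, 6, 7, 0, 1, 2, 3, 4, 5]
def f2 : Fin 24 → Fin 24 := ![10, 11, 12, 13, 14, 15, 8, 9, 18, 19, 20, 21, 22, 23, 16, 17, 4, 5, 6, 7, 0, 1, 2, 3]
def f3 : Fin 24 → Fin 24 := ![11, 12, 13, 14, 15, 8, 9, 10, 22, 23, 16, 17, 18, 19, 20, 21, 7, 0, 1, 2, 3, 4, 5, 6]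
def f4 : Fin 24 → Fin 24 := ![12, 13, 14, 15, 8, 9, 10, 11, 23, 16, 17, 18, 19, 20, 21, 22, 5, 6, 7, 0, 1, 2, 3, 4]
def f5 : Fin 24 → Fin 24 := ![1, 3, 0, 2, 5, 7, 4, 6, 9, 11, 8, 10, 13, 15, 12, 14, 17, 19, 16, 18, 21, 23, 20, 22]
def f6 : Fin 24 → Fin 24 := ![3, 2, 7, 6, 1, 0, 5, 4, 11, 10, 15, 14, 9, 8, 13, 12, 19, 18, 23, 22, 17, 16, 21, 20]
def f7 : Fin 24 → Fin 24 := ![6, 7, 4, 5, 3, 2, 1, 0, 14, 15, 12, 13, 11, 10, 9, 8, 22, 23, 20, 21, 19, 18, 17, 16]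
def f8 : Fin 24 → Fin 24 := ![15, 23, 8, 16, 11, 12, 19, 20, 3, 21, 22, 6, 7, 17, 18, 1, 2, 14, 13, 4, 5, 10, 9, 0]
def f9 : Fin 24 → Fin 24 := ![13, 16, 17, 9, 10, 18, 20, 14, 21, 4, 3, 22, 23, 7, 0, 19, 11, 12, 15, 5, 8, 6, 1, 2]
def f10 : Fin 24 → Fin 24 := ![21, 8, 9, 17, 18, 10, 12, 22, 19, 20, 23, 5, 16, 6, 1, 2, 13, 4, 3, 14, 15, 7, 0, 11]

def b0 : Fin 24 → ℕ := ![0, 1, 2, 3, 4, 5, 6, 7, 0, 1, 2, 3, 4, 5, 6, 7, 0, 1, 2, 3, 4, 5, 6, 7]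
def b1 : Fin 24 → ℕ := ![0, 1, 2, 3, 4, 5, 6, 7, 7, 0, 1, 2, 3, 4, 5, 6, 6, 7, 0, 1, 2, 3, 4, 5]
def b2 : Fin 24 → ℕ := ![0, 1, 2, 3, 4, 5, 6, 7, 6, 7, 0, 1, 2, 3, 4, 5, 4, 5, 6, 7, 0, 1, 2, 3]
def b3 : Fin 24 → ℕ := ![0, 1, 2, 3, 4, 5, 6, 7, 5, 6, 7, 0, 1, 2, 3, 4, 7, 0, 1, 2, 3, 4, 5, 6]
def b4 : Fin 24 → ℕ := ![0, 1, 2, 3, 4, 5, 6, 7, 4, 5, 6, 7, 0, 1, 2, 3, 5, 6, 7, 0, 1, 2, 3, 4]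
def b5 : Fin 24 → ℕ := ![0, 0, 0, 0, 1, 1, 1, 1, 2, 2, 2, 2, 3, 3, 3, 3, 4, 4, 4, 4, 5, 5, 5, 5]
def b6 : Fin 24 → ℕ := ![0, 1, 1, 0, 1, 0, 0, 1, 2, 3, 3, 2, 3, 2, 2, 3, 4, 5, 5, 4, 5, 4, 4, 5]
def b7 : Fin 24 → ℕ := ![0, 0, 1, 1, 1, 1, 0, 0, 2, 2, 3, 3, 3, 3, 2, 2, 4, 4, 5, 5, 5, 5, 4, 4]
def b8 : Fin 24 → ℕ := ![2, 2, 3, 3, 1, 0, 1, 0, 3, 4, 4, 1, 0, 5, 5, 2, 3, 5, 5, 1, 0, 4, 4, 2]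
def b9 : Fin 24 → ℕ := ![0, 2, 1, 5, 5, 3, 4, 0, 4, 5, 5, 2, 1, 0, 0, 3, 2, 1, 3, 3, 4, 4, 2, 1]
def b10 : Fin 24 → ℕ := ![4, 2, 3, 5, 5, 1, 0, 4, 2, 3, 1, 1, 0, 0, 2, 3, 0, 5, 5, 2, 3, 4, 4, 1]

def nxt : Fin 11 → Fin 24 → Fin 24 := ![f0, f1, f2, f3, f4, f5, f6, f7, f8, f9, f10]

def blkf : Fin 11 → Fin 24 → ℕ := ![b0, b1, b2, b3, b4, b5, b6, b7, b8, b9, b10]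

lemma fact_degM : ∀ v : Fin 24, (Finset.univ.filter fun w => (cyc m).Adj v w).card = 1 := by
  decide

lemma fact_deg : ∀ i : Fin 11, ∀ v : Fin 24,
    (Finset.univ.filter fun w => (cyc (nxt i)).Adj v w).card = 2 := by
  decide

lemma fact_nf : ∀ i : Fin 11, ∀ a, nxt i a ≠ a := by decide

lemma fact_blk : ∀ i : Fin 11, ∀ a b, (cyc (nxt i)).Adj a b → blkf i a = blkf i b := by
  decide

lemma fact_orb : ∀ i : Fin 11, ∀ u v : Fin 24,
    blkf i u = blkf i v → ∃ k : Fin 4, (nxt i)^[(k : ℕ)] u = v := by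
  decide

lemma fact_c3 : ∀ i : Fin 11, (i : ℕ) < 5 → ∀ v : Fin 24,
    (Finset.univ.filter fun u => blkf i u = blkf i v).card = 3 := by
  decide

lemma fact_c4 : ∀ i : Fin 11, 5 ≤ (i : ℕ) → ∀ v : Fin 24,
    (Finset.univ.filter fun u => blkf i u = blkf i v).card = 4 := by
  decide

lemma fact_le : ∀ i : Fin 11, ∀ a b, (cyc (nxt i)).Adj a b → a ≠ b ∧ ¬ (cyc m).Adj a b := by
  decide

lemma fact_part : ∀ a b : Fin 24, a ≠ b → ¬ (cyc m).Adj a b →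
    ∃ i : Fin 11, (cyc (nxt i)).Adj a b ∧ ∀ j : Fin 11, (cyc (nxt j)).Adj a b → j = i := by
  decide

lemma factor (i : Fin 11) (n : ℕ)
    (hn : ∀ v : Fin 24, (Finset.univ.filter fun u => blkf i u = blkf i v).card = n) :
    IsCycleFactor ((⊤ : SimpleGraph (Fin 24)) \ cyc m) (cyc (nxt i)) n := by
  refine ⟨⟨?_, ?_⟩, ?_⟩
  · intro a b hab
    rw [SimpleGraph.sdiff_adj, SimpleGraph.top_adj]
    exact fact_le i a b hab
  · intro v
    rw [ncard_neighborSet]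
    exact fact_deg i v
  · intro v
    rw [ncard_supp (nxt i) (blkf i) (fact_nf i) (fact_blk i) (fact_orb i) v]
    exact hn v

end HWP24

/-- HWP(24; 3, 4; 5, 6) has a solution: the complete graph `K_24` minus a perfect matching
`I` admits a 2-factorization with exactly 5 triangle-factors and 6 quadrangle-factors. -/
theorem hwp24_5_6 :
    ∃ M : SimpleGraph (Fin 24), (∀ v : Fin 24, (M.neighborSet v).ncard = 1) ∧
      ∃ F : Fin (5 + 6) → SimpleGraph (Fin 24),
        IsHWPSolution ((⊤ : SimpleGraph (Fin 24)) \ M) 5 6 F := by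
  refine ⟨HWP24.cyc HWP24.m, ?_, fun i => HWP24.cyc (HWP24.nxt i), ?_, ?_, ?_⟩
  · intro v
    rw [HWP24.ncard_neighborSet]
    exact HWP24.fact_degM v
  · intro i hi
    exact HWP24.factor i 3 (HWP24.fact_c3 i hi)
  · intro i hi
    exact HWP24.factor i 4 (HWP24.fact_c4 i hi)
  · intro e he
    revert he
    refine Sym2.ind (fun a b => ?_) e
    intro he
    rw [SimpleGraph.mem_edgeSet, SimpleGraph.sdiff_adj, SimpleGraph.top_adj] at he
    obtain ⟨i, hi, hu⟩ := HWP24.fact_part a b he.1 he.2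
    exact ⟨i, (SimpleGraph.mem_edgeSet _).mpr hi,
      fun j hj => hu j ((SimpleGraph.mem_edgeSet _).mp hj)⟩
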